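/- Let q ≥ 2 be an integer and let (τ_n)_{n≥0} be a strongly q-multiplicative sequence of complex numbers with |τ_n| ≤ 1 for all n. Let ψ(N) = Σ_{n<N} τ_n. If |ψ(q)| = |τ_0 + τ_1 + … + τ_{q−1}| ≤ 1, then ψ(N) = O(log N), i.e. there is a constant C such that |ψ(N)| ≤ C·log N for all N ≥ 2. -/

import Mathlib

open Finset

/-- If `τ` is a strongly `q`-multiplicative sequence of complex numbers
of absolute value at most `1`, and `|ψ(q)| ≤ 1` where `ψ(N) = ∑_{n<N} τ n`,
then `ψ(N) = O(log N)`. -/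
theorem rarefaction_stmt0
    (q : ℕ) (hq : 2 ≤ q) (τ : ℕ → ℂ)
    (hτ0 : τ 0 = 1)
    (hmul : ∀ n : ℕ, ∀ c : ℕ, c < q → τ (q * n + c) = τ n * τ c)
    (hbound : ∀ n : ℕ, ‖τ n‖ ≤ 1)
    (hsmall : ‖∑ n ∈ Finset.range q, τ n‖ ≤ 1) :
    ∃ C : ℝ, ∀ N : ℕ, 2 ≤ N →
      ‖∑ n ∈ Finset.range N, τ n‖ ≤ C * Real.log N := by
  have hq0 : (0:ℕ) < q := by omega
  -- sum bound: |S N| ≤ N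
  have hSbound : ∀ N : ℕ, ‖∑ n ∈ Finset.range N, τ n‖ ≤ N := by
    intro N
    calc ‖∑ n ∈ Finset.range N, τ n‖
        ≤ ∑ n ∈ Finset.range N, ‖τ n‖ := norm_sum_le _ _
      _ ≤ ∑ n ∈ Finset.range N, (1:ℝ) := Finset.sum_le_sum fun i _ => hbound i
      _ = N := by simp
  -- factorization of full blocks
  have hA : ∀ m : ℕ, ∑ n ∈ Finset.range (q * m), τ n
      = (∑ n ∈ Finset.range m, τ n) * ∑ n ∈ Finset.range q, τ n := by
    intro m
    induction m with
    | zero => simp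
    | succ m ih =>
        have h1 : q * (m + 1) = q * m + q := by ring
        have hInner : ∑ j ∈ Finset.range q, τ (q * m + j)
            = τ m * ∑ j ∈ Finset.range q, τ j := by
          rw [Finset.mul_sum]
          exact Finset.sum_congr rfl fun j hj => hmul m j (Finset.mem_range.mp hj)
        rw [h1, Finset.sum_range_add, hInner, ih, Finset.sum_range_succ]
        ring
  -- recursion
  have hrec : ∀ N : ℕ, ∑ n ∈ Finset.range N, τ n
      = (∑ n ∈ Finset.range (N / q), τ n) * (∑ n ∈ Finset.range q, τ n)
        + τ (N / q) * ∑ n ∈ Finset.range (N % q), τ n := by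
    intro N
    have hN : q * (N / q) + N % q = N := Nat.div_add_mod N q
    have hInner : ∑ j ∈ Finset.range (N % q), τ (q * (N / q) + j)
        = τ (N / q) * ∑ j ∈ Finset.range (N % q), τ j := by
      rw [Finset.mul_sum]
      refine Finset.sum_congr rfl fun j hj => ?_
      exact hmul _ j (lt_of_lt_of_le (Finset.mem_range.mp hj) (Nat.mod_lt N hq0).le)
    conv_lhs => rw [← hN]
    rw [Finset.sum_range_add, hInner, hA]
  -- bound recursion
  have hstep : ∀ N : ℕ, ‖∑ n ∈ Finset.range N, τ n‖
      ≤ ‖∑ n ∈ Finset.range (N / q), τ n‖ + q := by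
    intro N
    have b1 : ‖∑ n ∈ Finset.range (N / q), τ n‖ * ‖∑ n ∈ Finset.range q, τ n‖
        ≤ ‖∑ n ∈ Finset.range (N / q), τ n‖ * 1 :=
      mul_le_mul_of_nonneg_left hsmall (norm_nonneg _)
    have b2 : ‖τ (N / q)‖ * ‖∑ n ∈ Finset.range (N % q), τ n‖
        ≤ 1 * (q : ℝ) := by
      refine mul_le_mul (hbound _) ?_ (norm_nonneg _) zero_le_one
      exact le_trans (hSbound _) (by exact_mod_cast (Nat.mod_lt N hq0).le)
    calc ‖∑ n ∈ Finset.range N, τ n‖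
        = ‖(∑ n ∈ Finset.range (N / q), τ n) * (∑ n ∈ Finset.range q, τ n)
            + τ (N / q) * ∑ n ∈ Finset.range (N % q), τ n‖ := by rw [hrec N]
      _ ≤ ‖(∑ n ∈ Finset.range (N / q), τ n) * (∑ n ∈ Finset.range q, τ n)‖
            + ‖τ (N / q) * ∑ n ∈ Finset.range (N % q), τ n‖ :=
          norm_add_le _ _
      _ = ‖∑ n ∈ Finset.range (N / q), τ n‖ * ‖∑ n ∈ Finset.range q, τ n‖
            + ‖τ (N / q)‖ * ‖∑ n ∈ Finset.range (N % q), τ n‖ := by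
          rw [norm_mul, norm_mul]
      _ ≤ ‖∑ n ∈ Finset.range (N / q), τ n‖ + q := by linarith
  set L : ℝ := Real.log q with hL
  have hL0 : 0 < L := Real.log_pos (by exact_mod_cast lt_of_lt_of_le one_lt_two (by exact_mod_cast hq))
  have hq0' : (0:ℝ) ≤ (q:ℝ) := by positivity
  -- main claim by strong induction
  have hmain : ∀ N : ℕ, 1 ≤ N →
      ‖∑ n ∈ Finset.range N, τ n‖ ≤ q + q * Real.log N / L := by
    intro N
    induction N using Nat.strong_induction_on with
    | _ N ih =>
      intro hN1
      by_cases hNq : N < q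
      · have hlog : 0 ≤ Real.log N := Real.log_nonneg (by exact_mod_cast hN1)
        have hb := hSbound N
        have hNc : (N : ℝ) ≤ q := by exact_mod_cast hNq.le
        have : 0 ≤ (q:ℝ) * Real.log N / L := by positivity
        linarith
      · push_neg at hNq
        have hm1 : 1 ≤ N / q := (Nat.one_le_div_iff hq0).mpr hNq
        have hmN : N / q < N := Nat.div_lt_self (by omega) (by omega)
        have ihm := ih (N / q) hmN hm1
        have h1 := hstep N
        have hqmle : q * (N / q) ≤ N := Nat.mul_div_le N q
        have hm0 : (0:ℝ) < ((N / q : ℕ) : ℝ) := by exact_mod_cast hm1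
        have hx : (q:ℝ) * ((N / q : ℕ) : ℝ) ≤ (N : ℝ) := by exact_mod_cast hqmle
        have h0 : (0:ℝ) < (q : ℝ) * ((N / q : ℕ) : ℝ) := by positivity
        have hlogle : L + Real.log (N / q : ℕ) ≤ Real.log N := by
          have h2 := Real.log_le_log h0 hx
          rw [Real.log_mul (by positivity) hm0.ne'] at h2
          linarith
        -- multiply by q / L
        have hdiv : (q:ℝ) * Real.log (N / q : ℕ) / L + q ≤ q * Real.log N / L := by
          rw [div_add' _ _ _ hL0.ne', div_le_div_iff₀ hL0 hL0]
          nlinarith [mul_le_mul_of_nonneg_left hlogle (mul_nonneg hq0' hL0.le)]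
        calc ‖∑ n ∈ Finset.range N, τ n‖
            ≤ ‖∑ n ∈ Finset.range (N / q), τ n‖ + q := h1
          _ ≤ (q + q * Real.log (N / q : ℕ) / L) + q := by linarith
          _ ≤ q + q * Real.log N / L := by linarith
  refine ⟨q / Real.log 2 + q / L, fun N hN => ?_⟩
  have hlog2 : 0 < Real.log 2 := Real.log_pos one_lt_two
  have hlogN : Real.log 2 ≤ Real.log N :=
    Real.log_le_log two_pos (by exact_mod_cast hN)
  have h := hmain N (by omega)
  have h1 : (q : ℝ) ≤ q / Real.log 2 * Real.log N := by
    rw [div_mul_eq_mul_div, le_div_iff₀ hlog2]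
    nlinarith
  have h2 : (q : ℝ) * Real.log N / L = q / L * Real.log N := by ring
  calc ‖∑ n ∈ Finset.range N, τ n‖ ≤ q + q * Real.log N / L := h
    _ ≤ q / Real.log 2 * Real.log N + q / L * Real.log N := by rw [← h2]; linarith
    _ = (q / Real.log 2 + q / L) * Real.log N := by ring
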